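/- Let A be a commutative ring with a ℤ-grading 𝒜 : ℤ → AddSubgroup A making it a graded ring, and let u ∈ 𝒜 1 be such that for every i ≥ 1 the multiplication-by-u map 𝒜 i → 𝒜 (i+1), x ↦ u·x, is bijective. Then the composite map 𝒜 1 → A → A / (u − 1)A, sending x ∈ 𝒜 1 to the class of x modulo the ideal generated by u − 1, is bijective. -/

import Mathlib

private lemma aux_pullback {A : Type*} [CommRing A]
    (𝒜 : ℤ → AddSubgroup A) [GradedRing 𝒜] (u : A)
    (hbij : ∀ i : ℤ, 1 ≤ i → Set.BijOn (fun x => u * x) (𝒜 i) (𝒜 (i + 1))) :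
    ∀ k : ℕ, ∀ b ∈ 𝒜 (1 + (k : ℤ)), ∃ x ∈ 𝒜 1, u ^ k * x = b := by
  intro k
  induction k with
  | zero => intro b hb; exact ⟨b, by simpa using hb, by simp⟩
  | succ k ih =>
    intro b hb
    have h1 : (1 : ℤ) ≤ 1 + k := by omega
    have hb' : b ∈ 𝒜 ((1 + (k : ℤ)) + 1) := by
      push_cast at hb
      rwa [show (1 + ((k : ℤ) + 1)) = (1 + (k : ℤ)) + 1 by ring] at hb
    obtain ⟨y, hy, hyb⟩ := (hbij (1 + k) h1).surjOn hb'
    obtain ⟨x, hx, hxy⟩ := ih y hy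
    exact ⟨x, hx, by rw [pow_succ', mul_assoc, hxy]; exact hyb⟩

theorem gradedComponent_one_to_quotient_bijOn {A : Type*} [CommRing A]
    (𝒜 : ℤ → AddSubgroup A) [GradedRing 𝒜] (u : A) (hu : u ∈ 𝒜 1)
    (hbij : ∀ i : ℤ, 1 ≤ i → Set.BijOn (fun x => u * x) (𝒜 i) (𝒜 (i + 1))) :
    Set.BijOn (fun x => Ideal.Quotient.mk (Ideal.span {u - 1}) x) (𝒜 1) Set.univ := by
  classical
  set I : Ideal A := Ideal.span {u - 1} with hI
  have hmku : Ideal.Quotient.mk I u = 1 := by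
    have h0 : Ideal.Quotient.mk I (u - 1) = 0 :=
      Ideal.Quotient.eq_zero_iff_mem.mpr (Ideal.mem_span_singleton_self _)
    rw [map_sub, map_one, sub_eq_zero] at h0
    exact h0
  refine ⟨fun x _ => trivial, ?_, ?_⟩
  · -- InjOn
    intro x hx y hy hxy
    simp only at hxy
    have hd : x - y ∈ I := (Ideal.Quotient.mk_eq_mk_iff_sub_mem x y).mp hxy
    obtain ⟨c, hc⟩ := Ideal.mem_span_singleton'.mp hd
    have hc' : x - y = u * c - c := by rw [← hc]; ring
    set a : ℤ → A := fun i => (DirectSum.decompose 𝒜 c i : A) with ha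
    have hamem : ∀ j : ℤ, a j ∈ 𝒜 j := fun j => (DirectSum.decompose 𝒜 c j).2
    have rel : ∀ j : ℤ,
        ((DirectSum.decompose 𝒜 (x - y) (1 + j) : A)) = u * a j - a (1 + j) := by
      intro j
      rw [hc', DirectSum.decompose_sub]
      rw [DirectSum.sub_apply, AddSubgroup.coe_sub,
        DirectSum.coe_decompose_mul_add_of_left_mem 𝒜 hu]
    have hdmem : x - y ∈ 𝒜 1 := sub_mem hx hy
    have rel' : ∀ j : ℤ, j ≠ 0 → a (1 + j) = u * a j := by
      intro j hj
      have h0 : ((DirectSum.decompose 𝒜 (x - y) (1 + j) : A)) = 0 :=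
        DirectSum.decompose_of_mem_ne 𝒜 hdmem (show (1 : ℤ) ≠ 1 + j by omega)
      have h1 := rel j
      rw [h0] at h1
      exact (eq_of_sub_eq_zero h1.symm).symm
    -- support bounds
    have hzero : ∀ j : ℤ, j ∉ (DirectSum.decompose 𝒜 c).support → a j = 0 := by
      intro j hj
      have h0 : DirectSum.decompose 𝒜 c j = 0 := DFinsupp.notMem_support_iff.mp hj
      simp only [ha, h0, ZeroMemClass.coe_zero]
    obtain ⟨M, hM⟩ := Finset.exists_le (DirectSum.decompose 𝒜 c).support
    have hhigh : ∀ j : ℤ, M < j → a j = 0 := by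
      intro j hj
      exact hzero j (fun hmem => absurd (hM j hmem) (not_le.mpr hj))
    obtain ⟨m, hm⟩ := Finset.exists_le ((DirectSum.decompose 𝒜 c).support.image (fun i => -i))
    have hlow : ∀ j : ℤ, j < -m → a j = 0 := by
      intro j hj
      refine hzero j (fun hmem => ?_)
      have := hm (-j) (Finset.mem_image_of_mem _ hmem)
      omega
    -- positive side
    have hpos : ∀ n : ℕ, ∀ j : ℤ, 1 ≤ j → a (j + n) = 0 → a j = 0 := by
      intro n
      induction n with
      | zero => intro j _ h; simpa using h
      | succ n ih =>
        intro j hj h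
        refine ih j hj ?_
        have hr : a (1 + (j + n)) = u * a (j + n) := rel' (j + n) (by omega)
        have h1 : a (1 + (j + n)) = 0 := by
          rw [show (1 + (j + (n : ℤ))) = j + ((n : ℕ) + 1 : ℕ) by push_cast; ring]
          exact h
        have h2 : u * a (j + n) = u * 0 := by rw [mul_zero, ← hr, h1]
        have := (hbij (j + n) (by omega)).injOn (hamem (j + n)) (zero_mem _) h2
        exact this
    have ha1 : a 1 = 0 := by
      set n : ℕ := (M + 1 - 1).toNat + 1 with hn
      refine hpos n 1 le_rfl (hhigh _ ?_)
      have := Int.self_le_toNat (M + 1 - 1)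
      omega
    -- negative side
    have hneg : ∀ n : ℕ, a 0 = u ^ n * a (-(n : ℤ)) := by
      intro n
      induction n with
      | zero => simp
      | succ n ih =>
        have hr : a (1 + (-((n : ℤ) + 1))) = u * a (-((n : ℤ) + 1)) :=
          rel' (-((n : ℤ) + 1)) (by omega)
        rw [show (1 + (-((n : ℤ) + 1))) = -(n : ℤ) by ring] at hr
        rw [ih, hr, show (-(((n : ℕ) + 1 : ℕ) : ℤ)) = -((n : ℤ) + 1) by push_cast; ring,
          ← mul_assoc, ← pow_succ]
    have ha0 : a 0 = 0 := by
      set n : ℕ := (m + 1).toNat + 1 with hn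
      rw [hneg n, hlow (-(n : ℤ)) (by have := Int.self_le_toNat (m + 1); omega), mul_zero]
    have := rel 0
    rw [show ((1 : ℤ) + 0) = 1 by ring] at this
    rw [DirectSum.decompose_of_mem_same 𝒜 hdmem, ha0, ha1] at this
    simp only [mul_zero, sub_zero] at this
    exact sub_eq_zero.mp this
  · -- SurjOn
    have key : ∀ r : A, ∃ x ∈ 𝒜 1, Ideal.Quotient.mk I x = Ideal.Quotient.mk I r := by
      intro r
      induction r using DirectSum.Decomposition.inductionOn 𝒜 with
      | zero => exact ⟨0, zero_mem _, by simp⟩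
      | @homogeneous i m =>
        set k : ℕ := (1 - i).toNat with hk
        have hki : (1 : ℤ) ≤ (k : ℤ) + i := by
          have := Int.self_le_toNat (1 - i); omega
        set n : ℕ := ((k : ℤ) + i - 1).toNat with hn
        have hni : (n : ℤ) = (k : ℤ) + i - 1 := Int.toNat_of_nonneg (by omega)
        have hmu : u ^ k * (m : A) ∈ 𝒜 (1 + (n : ℤ)) := by
          have h1 : u ^ k ∈ 𝒜 ((k : ℤ)) := by
            have := SetLike.pow_mem_graded k hu
            simpa using this
          have := SetLike.mul_mem_graded h1 m.2
          rwa [show (1 + (n : ℤ)) = (k : ℤ) + i by omega]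
        obtain ⟨x, hx1, hxe⟩ := aux_pullback 𝒜 u hbij n _ hmu
        refine ⟨x, hx1, ?_⟩
        have e1 : Ideal.Quotient.mk I x = Ideal.Quotient.mk I (u ^ n * x) := by
          rw [map_mul, map_pow, hmku, one_pow, one_mul]
        rw [e1, hxe, map_mul, map_pow, hmku, one_pow, one_mul]
      | add r r' hr hr' =>
        obtain ⟨x, hx, e⟩ := hr
        obtain ⟨x', hx', e'⟩ := hr'
        exact ⟨x + x', add_mem hx hx', by rw [map_add, e, e', ← map_add]⟩
    intro b _
    obtain ⟨r, rfl⟩ := Ideal.Quotient.mk_surjective b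
    obtain ⟨x, hx, e⟩ := key r
    exact ⟨x, hx, e⟩
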